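/- Let n be a positive integer divisible by 6 and let (x,k), (y,l) ∈ P_{1,n}. Then ρ((x,k),(y,l)) ≤ d₁(φ_{1,n}(x,k), φ_{1,n}(y,l)) + 2. -/

import Mathlib

open scoped symmDiff

/-- Elements of the lamplighter group `Z₂ ≀ Z_n`: a set of lit lamps and a position. -/
abbrev Lamp (n : ℕ) := Set (ZMod n) × ZMod n

/-- Group multiplication `(x,g)·(y,h) = (x △ (g+y), g+h)`. -/
def lampMul {n : ℕ} (u v : Lamp n) : Lamp n :=
  (u.1 ∆ ((u.2 + ·) '' v.1), u.2 + v.2)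

/-- Group inverse in the lamplighter group. -/
def lampInv {n : ℕ} (u : Lamp n) : Lamp n :=
  ((· - u.2) '' u.1, -u.2)

/-- The generator `t = (∅, 1)`. -/
def lampT (n : ℕ) : Lamp n := (∅, 1)

/-- The generator `a = ({0}, 0)`. -/
def lampA (n : ℕ) : Lamp n := ({0}, 0)

/-- The generator `ta`. -/
def lampTA (n : ℕ) : Lamp n := lampMul (lampT n) (lampA n)

/-- Word metric w.r.t. a generating set `S`: the least `m` such that `u⁻¹v`
is a product of `m` elements of `S ∪ S⁻¹`, i.e. `v = u·s₁⋯s_m`. -/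
noncomputable def wordDist {n : ℕ} (S : Set (Lamp n)) (u v : Lamp n) : ℕ :=
  sInf {m | ∃ w : List (Lamp n), w.length = m ∧
    (∀ s ∈ w, s ∈ S ∨ ∃ g ∈ S, s = lampInv g) ∧ v = w.foldl lampMul u}

/-- The word metric `ρ` on `Z₂ ≀ Z_n` w.r.t. the generating set `{t, ta}`. -/
noncomputable def lampDist (n : ℕ) (u v : Lamp n) : ℕ :=
  wordDist {lampT n, lampTA n} u v

/-- Length of the longest common prefix of two vertices of the binary tree. -/
def lgc : List Bool → List Bool → ℕ
  | a :: as, b :: bs => if a = b then lgc as bs + 1 else 0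
  | _, _ => 0

/-- Graph distance in the binary tree (vertices = `{0,1}`-sequences). -/
def treeDist (A B : List Bool) : ℕ := A.length + B.length - 2 * lgc A B

/-- The arc `{a, a+1, ..., a+m}` in `Z_n`. -/
def arcSet (n : ℕ) (a : ZMod n) (m : ℕ) : Set (ZMod n) :=
  {z | ∃ i ≤ m, z = a + (i : ZMod n)}

/-- The arc `P₁ = {n/6, ..., 5n/6}` of `Z_n` (identified with `{0,...,n-1}` via `val`). -/
def P1set (n : ℕ) : Set (ZMod n) := {z | n / 6 ≤ z.val ∧ z.val ≤ 5 * n / 6}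

/-- The subset `P_{1,n} = {(x,k) ∈ G_n : k ∈ P₁}`. -/
def lampP1 (n : ℕ) : Set (Lamp n) := {u | u.2 ∈ P1set n}

/-- The set `W_n ⊆ T_n × T_n`. -/
def Wset (n : ℕ) : Set (List Bool × List Bool) :=
  {p | p.1.length + p.2.length = n ∧ n / 6 ≤ p.1.length ∧ p.1.length ≤ 5 * n / 6}

open Classical in
/-- The map `φ_{1,n} : P_{1,n} → W_n`. -/
noncomputable def phi1 (n : ℕ) (u : Lamp n) : List Bool × List Bool :=
  ((List.range u.2.val).map fun j => if ((j : ℕ) : ZMod n) ∈ u.1 then true else false,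
   (List.range (n - u.2.val)).map fun i => if ((n - 1 - i : ℕ) : ZMod n) ∈ u.1 then true else false)

/-- "X admits an equivalent uniformly convex norm" (= superreflexivity, by Enflo). -/
def HasEquivUnifConvexNorm (X : Type*) [NormedAddCommGroup X] [NormedSpace ℝ X] : Prop :=
  ∃ N : X → ℝ,
    (∀ x, N x = 0 ↔ x = 0) ∧
    (∀ (c : ℝ) (x : X), N (c • x) = |c| * N x) ∧
    (∀ x y, N (x + y) ≤ N x + N y) ∧
    (∃ c₁ > (0 : ℝ), ∃ c₂ > (0 : ℝ), ∀ x, c₁ * ‖x‖ ≤ N x ∧ N x ≤ c₂ * ‖x‖) ∧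
    (∀ ε > (0 : ℝ), ∃ δ > (0 : ℝ), ∀ x y,
      N x ≤ 1 → N y ≤ 1 → ε ≤ N (x - y) → N (x + y) ≤ 2 - δ)


def Gen (n : ℕ) (s : Lamp n) : Prop :=
  s ∈ ({lampT n, lampTA n} : Set (Lamp n)) ∨
    ∃ g ∈ ({lampT n, lampTA n} : Set (Lamp n)), s = lampInv g

def Reach (n : ℕ) (u v : Lamp n) (m : ℕ) : Prop :=
  ∃ w : List (Lamp n), w.length = m ∧ (∀ s ∈ w, Gen n s) ∧ v = w.foldl lampMul u

theorem lampDist_le_of_reach {n : ℕ} {u v : Lamp n} {m : ℕ} (h : Reach n u v m) :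
    lampDist n u v ≤ m := by
  obtain ⟨w, h1, h2, h3⟩ := h
  exact Nat.sInf_le ⟨w, h1, h2, h3⟩

theorem Reach.trans {n : ℕ} {u v w : Lamp n} {a b : ℕ}
    (h1 : Reach n u v a) (h2 : Reach n v w b) : Reach n u w (a + b) := by
  obtain ⟨w1, hl1, hg1, hf1⟩ := h1
  obtain ⟨w2, hl2, hg2, hf2⟩ := h2
  refine ⟨w1 ++ w2, by simp [hl1, hl2], ?_, ?_⟩
  · intro s hs
    rcases List.mem_append.1 hs with h | h
    exacts [hg1 s h, hg2 s h]
  · rw [List.foldl_append, ← hf1, ← hf2]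

theorem lampTA_eq {n : ℕ} : lampTA n = ({1}, 1) := by
  simp [lampTA, lampMul, lampT, lampA]

theorem reach_T {n : ℕ} (x : Set (ZMod n)) (p : ZMod n) : Reach n (x, p) (x, p + 1) 1 := by
  refine ⟨[lampT n], rfl, ?_, ?_⟩
  · intro s hs
    simp only [List.mem_singleton] at hs
    subst hs
    exact Or.inl (Set.mem_insert _ _)
  · simp only [lampMul, lampT, List.foldl_cons, List.foldl_nil, Set.image_empty]
    rw [show (∅ : Set (ZMod n)) = ⊥ from rfl, symmDiff_bot]

theorem reach_TA {n : ℕ} (x : Set (ZMod n)) (p : ZMod n) :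
    Reach n (x, p) (x ∆ {p + 1}, p + 1) 1 := by
  refine ⟨[lampTA n], rfl, ?_, ?_⟩
  · intro s hs
    simp only [List.mem_singleton] at hs
    subst hs
    exact Or.inl (Set.mem_insert_of_mem _ rfl)
  · simp [lampMul, lampTA_eq]

theorem reach_Tinv {n : ℕ} (x : Set (ZMod n)) (p : ZMod n) : Reach n (x, p) (x, p - 1) 1 := by
  refine ⟨[lampInv (lampT n)], rfl, ?_, ?_⟩
  · intro s hs
    simp only [List.mem_singleton] at hs
    subst hs
    exact Or.inr ⟨lampT n, Set.mem_insert _ _, rfl⟩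
  · simp only [lampMul, lampInv, lampT, List.foldl_cons, List.foldl_nil, Set.image_empty, sub_eq_add_neg]
    rw [show (∅ : Set (ZMod n)) = ⊥ from rfl, symmDiff_bot]

theorem reach_TAinv {n : ℕ} (x : Set (ZMod n)) (p : ZMod n) :
    Reach n (x, p) (x ∆ {p}, p - 1) 1 := by
  refine ⟨[lampInv (lampTA n)], rfl, ?_, ?_⟩
  · intro s hs
    simp only [List.mem_singleton] at hs
    subst hs
    exact Or.inr ⟨lampTA n, Set.mem_insert_of_mem _ rfl, rfl⟩
  · simp [lampMul, lampInv, lampTA_eq, sub_eq_add_neg]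

theorem reach_nil {n : ℕ} (u : Lamp n) : Reach n u u 0 := ⟨[], rfl, by simp, rfl⟩

theorem reach_right {n : ℕ} (x : Set (ZMod n)) (p : ZMod n) (m : ℕ) :
    Reach n (x, p) (x, p + (m : ZMod n)) m := by
  induction m generalizing p with
  | zero => simpa using reach_nil (x, p)
  | succ m ih =>
      have hpos : p + ((m + 1 : ℕ) : ZMod n) = (p + 1) + (m : ZMod n) := by push_cast; ring
      rw [hpos, show m + 1 = 1 + m from Nat.add_comm m 1]
      exact (reach_T x p).trans (ih (p + 1))

theorem reach_left {n : ℕ} (x : Set (ZMod n)) (p : ZMod n) (m : ℕ) :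
    Reach n (x, p) (x, p - (m : ZMod n)) m := by
  induction m generalizing p with
  | zero => simpa using reach_nil (x, p)
  | succ m ih =>
      have hpos : p - ((m + 1 : ℕ) : ZMod n) = (p - 1) - (m : ZMod n) := by push_cast; ring
      rw [hpos, show m + 1 = 1 + m from Nat.add_comm m 1]
      exact (reach_Tinv x p).trans (ih (p - 1))

theorem reach_right_toggle {n : ℕ} (m : ℕ) : ∀ (x D : Set (ZMod n)) (p : ZMod n),
    (∀ z ∈ D, ∃ i : ℕ, 1 ≤ i ∧ i ≤ m ∧ z = p + (i : ZMod n)) →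
    Reach n (x, p) (x ∆ D, p + (m : ZMod n)) m := by
  induction m with
  | zero =>
      intro x D p hD
      have hDe : D = ∅ := by
        ext z
        simp only [Set.mem_empty_iff_false, iff_false]
        intro hz
        obtain ⟨i, h1, h2, _⟩ := hD z hz
        omega
      subst hDe
      have : x ∆ (∅ : Set (ZMod n)) = x := by
        rw [show (∅ : Set (ZMod n)) = ⊥ from rfl, symmDiff_bot]
      rw [this]
      simpa using reach_nil (x, p)
  | succ m ih =>
      intro x D p hD
      have hpos : p + ((m + 1 : ℕ) : ZMod n) = (p + 1) + (m : ZMod n) := by push_cast; ring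
      by_cases hp : (p + 1) ∈ D
      · have hset : x ∆ D = (x ∆ {p + 1}) ∆ (D \ {p + 1}) := by
          ext z
          by_cases hz : z = p + 1
          · subst hz
            simp [Set.mem_symmDiff, hp]
          · simp only [Set.mem_symmDiff, Set.mem_diff, Set.mem_singleton_iff, hz]
            tauto
        rw [hset, hpos, show m + 1 = 1 + m from Nat.add_comm m 1]
        refine (reach_TA x p).trans (ih (x ∆ {p + 1}) (D \ {p + 1}) (p + 1) ?_)
        intro z hz
        obtain ⟨i, h1, h2, h3⟩ := hD z hz.1
        have hi : 2 ≤ i := by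
          by_contra h
          have hi1 : i = 1 := by omega
          subst hi1
          exact hz.2 (by rw [h3]; simp)
        refine ⟨i - 1, by omega, by omega, ?_⟩
        rw [h3, Nat.cast_sub (by omega : 1 ≤ i)]
        push_cast
        ring
      · rw [hpos, show m + 1 = 1 + m from Nat.add_comm m 1]
        refine (reach_T x p).trans (ih x D (p + 1) ?_)
        intro z hz
        obtain ⟨i, h1, h2, h3⟩ := hD z hz
        have hi : 2 ≤ i := by
          by_contra h
          have hi1 : i = 1 := by omega
          subst hi1
          have hz1 : z = p + 1 := by rw [h3]; simp
          exact hp (hz1 ▸ hz)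
        refine ⟨i - 1, by omega, by omega, ?_⟩
        rw [h3, Nat.cast_sub (by omega : 1 ≤ i)]
        push_cast
        ring

theorem reach_left_toggle {n : ℕ} (m : ℕ) : ∀ (x D : Set (ZMod n)) (p : ZMod n),
    (∀ z ∈ D, ∃ i : ℕ, i < m ∧ z = p - (i : ZMod n)) →
    Reach n (x, p) (x ∆ D, p - (m : ZMod n)) m := by
  induction m with
  | zero =>
      intro x D p hD
      have hDe : D = ∅ := by
        ext z
        simp only [Set.mem_empty_iff_false, iff_false]
        intro hz
        obtain ⟨i, h1, _⟩ := hD z hz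
        omega
      subst hDe
      have : x ∆ (∅ : Set (ZMod n)) = x := by
        rw [show (∅ : Set (ZMod n)) = ⊥ from rfl, symmDiff_bot]
      rw [this]
      simpa using reach_nil (x, p)
  | succ m ih =>
      intro x D p hD
      have hpos : p - ((m + 1 : ℕ) : ZMod n) = (p - 1) - (m : ZMod n) := by push_cast; ring
      by_cases hp : p ∈ D
      · have hset : x ∆ D = (x ∆ {p}) ∆ (D \ {p}) := by
          ext z
          by_cases hz : z = p
          · subst hz
            simp [Set.mem_symmDiff, hp]
          · simp only [Set.mem_symmDiff, Set.mem_diff, Set.mem_singleton_iff, hz]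
            tauto
        rw [hset, hpos, show m + 1 = 1 + m from Nat.add_comm m 1]
        refine (reach_TAinv x p).trans (ih (x ∆ {p}) (D \ {p}) (p - 1) ?_)
        intro z hz
        obtain ⟨i, h1, h3⟩ := hD z hz.1
        have hi : 1 ≤ i := by
          rcases Nat.eq_zero_or_pos i with h | h
          · subst h
            exact absurd (by rw [h3]; simp : z = p) (by simpa using hz.2)
          · exact h
        refine ⟨i - 1, by omega, ?_⟩
        rw [h3, Nat.cast_sub hi]
        push_cast
        ring
      · rw [hpos, show m + 1 = 1 + m from Nat.add_comm m 1]
        refine (reach_Tinv x p).trans (ih x D (p - 1) ?_)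
        intro z hz
        obtain ⟨i, h1, h3⟩ := hD z hz
        have hi : 1 ≤ i := by
          rcases Nat.eq_zero_or_pos i with h | h
          · subst h
            have hzp : z = p := by rw [h3]; simp
            exact absurd (hzp ▸ hz) hp
          · exact h
        refine ⟨i - 1, by omega, ?_⟩
        rw [h3, Nat.cast_sub hi]
        push_cast
        ring


theorem lgc_le_left : ∀ (a b : List Bool), lgc a b ≤ a.length := by
  intro a
  induction a with
  | nil => intro b; cases b <;> simp [lgc]
  | cons c as ih =>
      intro b
      cases b with
      | nil => simp [lgc]
      | cons d bs =>
          by_cases h : c = d <;> simp [lgc, h]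
          exact ih bs

theorem lgc_le_right : ∀ (a b : List Bool), lgc a b ≤ b.length := by
  intro a
  induction a with
  | nil => intro b; cases b <;> simp [lgc]
  | cons c as ih =>
      intro b
      cases b with
      | nil => simp [lgc]
      | cons d bs =>
          by_cases h : c = d <;> simp [lgc, h]
          exact ih bs

theorem lgc_getElem? : ∀ (a b : List Bool) (i : ℕ), i < lgc a b → a[i]? = b[i]? := by
  intro a
  induction a with
  | nil => intro b i h; cases b <;> simp [lgc] at h
  | cons c as ih =>
      intro b i h
      cases b with
      | nil => simp [lgc] at h
      | cons d bs =>
          by_cases hcd : c = d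
          · subst hcd
            rw [show lgc (c :: as) (c :: bs) = lgc as bs + 1 from by simp [lgc]] at h
            cases i with
            | zero => simp
            | succ i => simpa using ih bs i (by omega)
          · simp [lgc, hcd] at h

/-- For `(x,k), (y,l) ∈ P_{1,n}`: `ρ((x,k),(y,l)) ≤ d₁(φ_{1,n}(x,k), φ_{1,n}(y,l)) + 2`. -/
theorem lampDist_le_d1_phi1
    (n : ℕ) (hn : 0 < n) (h6 : 6 ∣ n)
    (x y : Set (ZMod n)) (k l : ZMod n)
    (hxk : ((x, k) : Lamp n) ∈ lampP1 n) (hyl : ((y, l) : Lamp n) ∈ lampP1 n) :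
    lampDist n (x, k) (y, l) ≤
      treeDist (phi1 n (x, k)).1 (phi1 n (y, l)).1 +
        treeDist (phi1 n (x, k)).2 (phi1 n (y, l)).2 + 2 := by
  haveI : NeZero n := ⟨hn.ne'⟩
  classical
  simp only [lampP1, P1set, Set.mem_setOf_eq] at hxk hyl
  obtain ⟨hk1, hk2⟩ := hxk
  obtain ⟨hl1, hl2⟩ := hyl
  set kv := k.val with hkv
  set lv := l.val with hlv
  set p₁ := lgc (phi1 n (x, k)).1 (phi1 n (y, l)).1 with hp₁def
  set p₂ := lgc (phi1 n (x, k)).2 (phi1 n (y, l)).2 with hp₂def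
  have hA1 : (phi1 n (x, k)).1.length = kv := by simp [phi1]; rfl
  have hA2 : (phi1 n (x, k)).2.length = n - kv := by simp [phi1]; rfl
  have hB1 : (phi1 n (y, l)).1.length = lv := by simp [phi1]; rfl
  have hB2 : (phi1 n (y, l)).2.length = n - lv := by simp [phi1]; rfl
  have hp1k : p₁ ≤ kv := hA1 ▸ lgc_le_left _ _
  have hp1l : p₁ ≤ lv := hB1 ▸ lgc_le_right _ _
  have hp2k : p₂ ≤ n - kv := hA2 ▸ lgc_le_left _ _
  have hp2l : p₂ ≤ n - lv := hB2 ▸ lgc_le_right _ _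
  have hkvn : kv < n := ZMod.val_lt k
  have hlvn : lv < n := ZMod.val_lt l
  have hkk : ((kv : ℕ) : ZMod n) = k := by rw [hkv, ZMod.natCast_val, ZMod.cast_id]
  have hll : ((lv : ℕ) : ZMod n) = l := by rw [hlv, ZMod.natCast_val, ZMod.cast_id]
  have ht1 : treeDist (phi1 n (x, k)).1 (phi1 n (y, l)).1 = kv + lv - 2 * p₁ := by
    rw [treeDist, hA1, hB1]
  have ht2 : treeDist (phi1 n (x, k)).2 (phi1 n (y, l)).2 = (n - kv) + (n - lv) - 2 * p₂ := by
    rw [treeDist, hA2, hB2]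
  rw [ht1, ht2]
  -- index agreement facts
  have hindex1 : ∀ j : ℕ, j < p₁ → (((j : ℕ) : ZMod n) ∈ x ↔ ((j : ℕ) : ZMod n) ∈ y) := by
    intro j hj
    have h := lgc_getElem? _ _ j hj
    simp only [phi1] at h
    rw [List.getElem?_map, List.getElem?_map, List.getElem?_range (show j < kv by omega),
      List.getElem?_range (show j < lv by omega)] at h
    simp only [Option.map_some, Option.some.injEq] at h
    by_cases hx2 : ((j : ℕ) : ZMod n) ∈ x <;> by_cases hy2 : ((j : ℕ) : ZMod n) ∈ y <;>
      simp only [hx2, hy2, if_true, if_false, if_pos, if_neg, not_false_iff] at h ⊢ <;> tauto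
  have hindex2 : ∀ i : ℕ, i < p₂ →
      (((n - 1 - i : ℕ) : ZMod n) ∈ x ↔ ((n - 1 - i : ℕ) : ZMod n) ∈ y) := by
    intro i hi
    have h := lgc_getElem? _ _ i hi
    simp only [phi1] at h
    rw [List.getElem?_map, List.getElem?_map, List.getElem?_range (show i < n - kv by omega),
      List.getElem?_range (show i < n - lv by omega)] at h
    simp only [Option.map_some, Option.some.injEq] at h
    by_cases hx2 : ((n - 1 - i : ℕ) : ZMod n) ∈ x <;>
      by_cases hy2 : ((n - 1 - i : ℕ) : ZMod n) ∈ y <;>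
      simp only [hx2, hy2, if_true, if_false, if_pos, if_neg, not_false_iff] at h ⊢ <;> tauto
  have hD : ∀ z ∈ x ∆ y, p₁ ≤ z.val ∧ z.val ≤ n - 1 - p₂ := by
    intro z hz
    have hzn : z.val < n := ZMod.val_lt z
    have hzz : ((z.val : ℕ) : ZMod n) = z := by rw [ZMod.natCast_val, ZMod.cast_id]
    rw [Set.mem_symmDiff] at hz
    constructor
    · by_contra h
      push_neg at h
      have := hindex1 z.val h
      rw [hzz] at this
      tauto
    · by_contra h
      push_neg at h
      have hi : n - 1 - z.val < p₂ := by omega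
      have := hindex2 (n - 1 - z.val) hi
      rw [show n - 1 - (n - 1 - z.val) = z.val from by omega, hzz] at this
      tauto
  rcases le_total kv lv with hkl | hkl
  · -- Plan 1: left sweep, right toggle sweep, left sweep
    set M := max lv (n - 1 - p₂) with hM
    have hlM : lv ≤ M := le_max_left _ _
    have hpM : n - 1 - p₂ ≤ M := le_max_right _ _
    have hp1M : p₁ ≤ M := le_trans hp1l hlM
    have r1 := reach_left x k (kv - p₁ + 1)
    have hcond : ∀ z ∈ x ∆ y, ∃ i : ℕ, 1 ≤ i ∧ i ≤ M - p₁ + 1 ∧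
        z = (k - ((kv - p₁ + 1 : ℕ) : ZMod n)) + (i : ZMod n) := by
      intro z hz
      obtain ⟨hz1, hz2⟩ := hD z hz
      have hzz : ((z.val : ℕ) : ZMod n) = z := by rw [ZMod.natCast_val, ZMod.cast_id]
      refine ⟨z.val - p₁ + 1, by omega, by omega, ?_⟩
      simp only [Nat.cast_add, Nat.cast_one, Nat.cast_sub hp1k, Nat.cast_sub hz1, hkk, hzz]
      ring
    have r2 := reach_right_toggle (M - p₁ + 1) x (x ∆ y)
      (k - ((kv - p₁ + 1 : ℕ) : ZMod n)) hcond
    have r3 := reach_left (x ∆ (x ∆ y))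
      (k - ((kv - p₁ + 1 : ℕ) : ZMod n) + ((M - p₁ + 1 : ℕ) : ZMod n)) (M - lv)
    have r := (r1.trans r2).trans r3
    rw [symmDiff_symmDiff_cancel_left] at r
    have hfin : k - ((kv - p₁ + 1 : ℕ) : ZMod n) + ((M - p₁ + 1 : ℕ) : ZMod n)
        - ((M - lv : ℕ) : ZMod n) = l := by
      simp only [Nat.cast_add, Nat.cast_one, Nat.cast_sub hp1k, Nat.cast_sub hp1M,
        Nat.cast_sub hlM, hkk, hll]
      rw [← hll]
      ring
    rw [hfin] at r
    refine le_trans (lampDist_le_of_reach r) ?_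
    rcases max_choice lv (n - 1 - p₂) with h | h <;> omega
  · -- Plan 2: right sweep, left toggle sweep, right sweep
    set M := max kv (n - 1 - p₂) with hM
    have hkM : kv ≤ M := le_max_left _ _
    have hpM : n - 1 - p₂ ≤ M := le_max_right _ _
    have hp1M : p₁ ≤ M := le_trans (le_trans hp1l hkl) hkM
    have r1 := reach_right x k (M - kv)
    have hcond : ∀ z ∈ x ∆ y, ∃ i : ℕ, i < M - p₁ + 1 ∧
        z = (k + ((M - kv : ℕ) : ZMod n)) - (i : ZMod n) := by
      intro z hz
      obtain ⟨hz1, hz2⟩ := hD z hz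
      have hzz : ((z.val : ℕ) : ZMod n) = z := by rw [ZMod.natCast_val, ZMod.cast_id]
      have hzM : z.val ≤ M := by omega
      refine ⟨M - z.val, by omega, ?_⟩
      simp only [Nat.cast_sub hkM, Nat.cast_sub hzM, hkk, hzz]
      ring
    have r2 := reach_left_toggle (M - p₁ + 1) x (x ∆ y) (k + ((M - kv : ℕ) : ZMod n)) hcond
    have r3 := reach_right (x ∆ (x ∆ y))
      (k + ((M - kv : ℕ) : ZMod n) - ((M - p₁ + 1 : ℕ) : ZMod n)) (lv - p₁ + 1)
    have r := (r1.trans r2).trans r3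
    rw [symmDiff_symmDiff_cancel_left] at r
    have hfin : k + ((M - kv : ℕ) : ZMod n) - ((M - p₁ + 1 : ℕ) : ZMod n)
        + ((lv - p₁ + 1 : ℕ) : ZMod n) = l := by
      simp only [Nat.cast_add, Nat.cast_one, Nat.cast_sub hkM, Nat.cast_sub hp1M,
        Nat.cast_sub hp1l, hkk, hll]
      rw [← hll]
      ring
    rw [hfin] at r
    refine le_trans (lampDist_le_of_reach r) ?_
    rcases max_choice kv (n - 1 - p₂) with h | h <;> omega
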